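/- Let f, g ∈ E_{(β,μ)} with β > 0 and μ > 1, and set ψ(m) = (2π)^{−1/2} (f ∗ g)(m) where ∗ is the standard convolution on ℝ. Then ψ ∈ E_{(β,μ)} and for all z in the strip H_β = {|Im z| < β}, F⁻¹(f)(z) · F⁻¹(g)(z) = F⁻¹(ψ)(z). -/

import Mathlib

open MeasureTheory Real Complex
open scoped Convolution

def memE (β μ : ℝ) (h : ℝ → ℂ) : Prop :=
  Continuous h ∧ BddAbove (Set.range fun m : ℝ =>
    (1 + |m|) ^ μ * Real.exp (β * |m|) * ‖h m‖)

private lemma wInt {μ : ℝ} (hμ : 1 < μ) : Integrable (fun t : ℝ => (1 + |t|) ^ (-μ)) := by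
  have h := integrable_one_add_norm (E := ℝ) (μ := volume) (r := μ) (by simpa using hμ)
  simpa [Real.norm_eq_abs] using h

private lemma memE_bound {β μ : ℝ} {h : ℝ → ℂ} (hh : memE β μ h) :
    ∃ C : ℝ, 0 ≤ C ∧ ∀ m : ℝ, ‖h m‖ ≤ C * ((1 + |m|) ^ (-μ) * Real.exp (-(β * |m|))) := by
  obtain ⟨C, hC⟩ := hh.2
  have key : ∀ m : ℝ, (1 + |m|) ^ μ * Real.exp (β * |m|) * ‖h m‖ ≤ C :=
    fun m => hC ⟨m, rfl⟩
  have hC0 : 0 ≤ C := le_trans (by positivity) (key 0)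
  refine ⟨C, hC0, fun m => ?_⟩
  have h1 : (0:ℝ) < 1 + |m| := by positivity
  have h2 : (0:ℝ) < (1 + |m|) ^ μ := Real.rpow_pos_of_pos h1 μ
  have h3 : (0:ℝ) < Real.exp (β * |m|) := Real.exp_pos _
  rw [Real.rpow_neg h1.le, Real.exp_neg]
  calc ‖h m‖
      = (((1 + |m|) ^ μ)⁻¹ * (Real.exp (β * |m|))⁻¹) *
        ((1 + |m|) ^ μ * Real.exp (β * |m|) * ‖h m‖) := by
        field_simp
    _ ≤ (((1 + |m|) ^ μ)⁻¹ * (Real.exp (β * |m|))⁻¹) * C := by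
        have hnn : (0:ℝ) ≤ ((1 + |m|) ^ μ)⁻¹ * (Real.exp (β * |m|))⁻¹ := by positivity
        exact mul_le_mul_of_nonneg_left (key m) hnn
    _ = C * (((1 + |m|) ^ μ)⁻¹ * (Real.exp (β * |m|))⁻¹) := by ring

private lemma key_ineq {μ : ℝ} (hμ : 0 < μ) (m m₁ : ℝ) :
    (1 + |m - m₁|) ^ (-μ) * (1 + |m₁|) ^ (-μ) ≤
      2 ^ μ * (1 + |m|) ^ (-μ) * ((1 + |m - m₁|) ^ (-μ) + (1 + |m₁|) ^ (-μ)) := by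
  have habs : |m| ≤ |m - m₁| + |m₁| := by
    calc |m| = |(m - m₁) + m₁| := by ring_nf
    _ ≤ |m - m₁| + |m₁| := abs_add_le _ _
  have hhalf : (1 + |m| / 2) ^ (-μ) ≤ 2 ^ μ * (1 + |m|) ^ (-μ) := by
    have h2 : (1 + |m|) / 2 ≤ 1 + |m| / 2 := by linarith [abs_nonneg m]
    have hp : (0:ℝ) < (1 + |m|) / 2 := by positivity
    have h3 := Real.rpow_le_rpow_of_nonpos hp h2 (neg_nonpos.mpr hμ.le)
    have hdiv : ((1 + |m|) / 2) ^ (-μ) = (1 + |m|) ^ (-μ) / 2 ^ (-μ) :=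
      Real.div_rpow (by positivity) (by norm_num) (-μ)
    have h2pos : (0:ℝ) < (2:ℝ) ^ (-μ) := Real.rpow_pos_of_pos two_pos _
    have hinv : ((2:ℝ) ^ (-μ))⁻¹ = 2 ^ μ := by
      rw [← Real.rpow_neg (by norm_num : (0:ℝ) ≤ 2), neg_neg]
    calc (1 + |m| / 2) ^ (-μ) ≤ ((1 + |m|) / 2) ^ (-μ) := h3
      _ = (1 + |m|) ^ (-μ) * ((2:ℝ) ^ (-μ))⁻¹ := by rw [hdiv, div_eq_mul_inv]
      _ = 2 ^ μ * (1 + |m|) ^ (-μ) := by rw [hinv]; ring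
  have hwnn : ∀ t : ℝ, (0:ℝ) ≤ (1 + |t|) ^ (-μ) := fun t => by positivity
  rcases le_total (|m| / 2) (|m - m₁|) with hcase | hcase
  · have hle : (1 + |m - m₁|) ^ (-μ) ≤ (1 + |m| / 2) ^ (-μ) :=
      Real.rpow_le_rpow_of_nonpos (by positivity) (by linarith) (neg_nonpos.mpr hμ.le)
    calc (1 + |m - m₁|) ^ (-μ) * (1 + |m₁|) ^ (-μ)
        ≤ (2 ^ μ * (1 + |m|) ^ (-μ)) * (1 + |m₁|) ^ (-μ) :=
          mul_le_mul_of_nonneg_right (hle.trans hhalf) (hwnn m₁)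
      _ ≤ 2 ^ μ * (1 + |m|) ^ (-μ) * ((1 + |m - m₁|) ^ (-μ) + (1 + |m₁|) ^ (-μ)) := by
          have : (0:ℝ) ≤ 2 ^ μ * (1 + |m|) ^ (-μ) := by positivity
          nlinarith [hwnn (m - m₁)]
  · have hb : |m| / 2 ≤ |m₁| := by linarith
    have hle : (1 + |m₁|) ^ (-μ) ≤ (1 + |m| / 2) ^ (-μ) :=
      Real.rpow_le_rpow_of_nonpos (by positivity) (by linarith) (neg_nonpos.mpr hμ.le)
    calc (1 + |m - m₁|) ^ (-μ) * (1 + |m₁|) ^ (-μ)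
        ≤ (1 + |m - m₁|) ^ (-μ) * (2 ^ μ * (1 + |m|) ^ (-μ)) :=
          mul_le_mul_of_nonneg_left (hle.trans hhalf) (hwnn (m - m₁))
      _ ≤ 2 ^ μ * (1 + |m|) ^ (-μ) * ((1 + |m - m₁|) ^ (-μ) + (1 + |m₁|) ^ (-μ)) := by
          have : (0:ℝ) ≤ 2 ^ μ * (1 + |m|) ^ (-μ) := by positivity
          nlinarith [hwnn m₁]

/-- For `f, g ∈ E_{(β,μ)}` with `β > 0`, `μ > 1`, the function
`ψ(m) = (2π)^{-1/2} (f∗g)(m)` belongs to `E_{(β,μ)}` and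
`F⁻¹(f)(z)·F⁻¹(g)(z) = F⁻¹(ψ)(z)` on the strip `H_β`. -/
theorem inverse_fourier_of_convolution (β μ : ℝ) (hβ : 0 < β) (hμ : 1 < μ)
    (f g : ℝ → ℂ) (hf : memE β μ f) (hg : memE β μ g) :
    memE β μ (fun m => ((Real.sqrt (2 * Real.pi))⁻¹ : ℝ) *
      ∫ m₁ : ℝ, f (m - m₁) * g m₁) ∧
    ∀ z : ℂ, |z.im| < β →
      (((Real.sqrt (2 * Real.pi))⁻¹ : ℝ) *
          ∫ m : ℝ, f m * Complex.exp (Complex.I * z * (m : ℂ))) *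
        (((Real.sqrt (2 * Real.pi))⁻¹ : ℝ) *
          ∫ m : ℝ, g m * Complex.exp (Complex.I * z * (m : ℂ)))
      = ((Real.sqrt (2 * Real.pi))⁻¹ : ℝ) *
          ∫ m : ℝ, (((Real.sqrt (2 * Real.pi))⁻¹ : ℝ) *
              ∫ m₁ : ℝ, f (m - m₁) * g m₁) *
            Complex.exp (Complex.I * z * (m : ℂ)) := by
  obtain ⟨hfc, hfb⟩ := hf
  obtain ⟨hgc, hgb⟩ := hg
  obtain ⟨Cf, hCf0, hCf⟩ := memE_bound ⟨hfc, hfb⟩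
  obtain ⟨Cg, hCg0, hCg⟩ := memE_bound ⟨hgc, hgb⟩
  have hμ0 : (0:ℝ) < μ := lt_trans one_pos hμ
  have hw_int : Integrable (fun t : ℝ => (1 + |t|) ^ (-μ)) := wInt hμ
  set I : ℝ := ∫ t : ℝ, (1 + |t|) ^ (-μ) with hI
  have hI0 : 0 ≤ I := integral_nonneg fun t => by positivity
  have hwnn : ∀ t : ℝ, (0:ℝ) ≤ (1 + |t|) ^ (-μ) := fun t => by positivity
  have hw1 : ∀ t : ℝ, (1 + |t|) ^ (-μ) ≤ 1 := fun t =>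
    Real.rpow_le_one_of_one_le_of_nonpos (by linarith [abs_nonneg t]) (by linarith)
  have hexp1 : ∀ t : ℝ, Real.exp (-(β * |t|)) ≤ 1 := fun t => by
    rw [Real.exp_le_one_iff]
    have := abs_nonneg t; nlinarith
  have hCf' : ∀ m : ℝ, ‖f m‖ ≤ Cf * (1 + |m|) ^ (-μ) := fun m => by
    have h := hCf m
    have : Cf * ((1 + |m|) ^ (-μ) * Real.exp (-(β * |m|))) ≤ Cf * (1 + |m|) ^ (-μ) := by
      nlinarith [mul_nonneg (mul_nonneg hCf0 (hwnn m)) (sub_nonneg.mpr (hexp1 m))]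
    linarith
  have hCg' : ∀ m : ℝ, ‖g m‖ ≤ Cg * (1 + |m|) ^ (-μ) := fun m => by
    have h := hCg m
    have : Cg * ((1 + |m|) ^ (-μ) * Real.exp (-(β * |m|))) ≤ Cg * (1 + |m|) ^ (-μ) := by
      nlinarith [mul_nonneg (mul_nonneg hCg0 (hwnn m)) (sub_nonneg.mpr (hexp1 m))]
    linarith
  have hf_int : Integrable f := (hw_int.const_mul Cf).mono'
    hfc.aestronglyMeasurable (Filter.Eventually.of_forall hCf')
  have hg_int : Integrable g := (hw_int.const_mul Cg).mono'
    hgc.aestronglyMeasurable (Filter.Eventually.of_forall hCg')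
  have habs : ∀ m m₁ : ℝ, |m| ≤ |m - m₁| + |m₁| := fun m m₁ => by
    calc |m| = |(m - m₁) + m₁| := by ring_nf
    _ ≤ |m - m₁| + |m₁| := abs_add_le _ _
  -- pointwise bound for the convolution integrand
  have hpt : ∀ m m₁ : ℝ, ‖f (m - m₁) * g m₁‖ ≤
      (Cf * Cg * (2 ^ μ * (1 + |m|) ^ (-μ) * Real.exp (-(β * |m|)))) *
        ((1 + |m - m₁|) ^ (-μ) + (1 + |m₁|) ^ (-μ)) := by
    intro m m₁
    have h1 := hCf (m - m₁)
    have h2 := hCg m₁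
    have hexp : Real.exp (-(β * |m - m₁|)) * Real.exp (-(β * |m₁|)) ≤
        Real.exp (-(β * |m|)) := by
      rw [← Real.exp_add]
      apply Real.exp_le_exp.mpr
      nlinarith [habs m m₁, hβ.le]
    calc ‖f (m - m₁) * g m₁‖ = ‖f (m - m₁)‖ * ‖g m₁‖ := norm_mul _ _
      _ ≤ (Cf * ((1 + |m - m₁|) ^ (-μ) * Real.exp (-(β * |m - m₁|)))) *
          (Cg * ((1 + |m₁|) ^ (-μ) * Real.exp (-(β * |m₁|)))) :=
            mul_le_mul h1 h2 (norm_nonneg _) (by positivity)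
      _ = (Cf * Cg) * (((1 + |m - m₁|) ^ (-μ) * (1 + |m₁|) ^ (-μ)) *
          (Real.exp (-(β * |m - m₁|)) * Real.exp (-(β * |m₁|)))) := by ring
      _ ≤ (Cf * Cg) * ((2 ^ μ * (1 + |m|) ^ (-μ) *
            ((1 + |m - m₁|) ^ (-μ) + (1 + |m₁|) ^ (-μ))) * Real.exp (-(β * |m|))) := by
          apply mul_le_mul_of_nonneg_left _ (by positivity)
          exact mul_le_mul (key_ineq hμ0 m m₁) hexp (by positivity) (by positivity)
      _ = (Cf * Cg * (2 ^ μ * (1 + |m|) ^ (-μ) * Real.exp (-(β * |m|)))) *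
          ((1 + |m - m₁|) ^ (-μ) + (1 + |m₁|) ^ (-μ)) := by ring
  have hmaj_int : ∀ m : ℝ, Integrable (fun m₁ : ℝ =>
      (Cf * Cg * (2 ^ μ * (1 + |m|) ^ (-μ) * Real.exp (-(β * |m|)))) *
        ((1 + |m - m₁|) ^ (-μ) + (1 + |m₁|) ^ (-μ))) := fun m =>
    ((hw_int.comp_sub_left m).add hw_int).const_mul _
  have hbound : ∀ m : ℝ, ‖∫ m₁ : ℝ, f (m - m₁) * g m₁‖ ≤
      (Cf * Cg * (2 ^ μ * (1 + |m|) ^ (-μ) * Real.exp (-(β * |m|)))) * (2 * I) := by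
    intro m
    calc ‖∫ m₁ : ℝ, f (m - m₁) * g m₁‖ ≤ ∫ m₁ : ℝ, ‖f (m - m₁) * g m₁‖ :=
        norm_integral_le_integral_norm _
      _ ≤ ∫ m₁ : ℝ, (Cf * Cg * (2 ^ μ * (1 + |m|) ^ (-μ) * Real.exp (-(β * |m|)))) *
            ((1 + |m - m₁|) ^ (-μ) + (1 + |m₁|) ^ (-μ)) :=
        integral_mono_of_nonneg (Filter.Eventually.of_forall fun t => norm_nonneg _)
          (hmaj_int m) (Filter.Eventually.of_forall (hpt m))
      _ = (Cf * Cg * (2 ^ μ * (1 + |m|) ^ (-μ) * Real.exp (-(β * |m|)))) * (2 * I) := by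
          rw [integral_const_mul, integral_add (hw_int.comp_sub_left m) hw_int,
            integral_sub_left_eq_self (fun t : ℝ => (1 + |t|) ^ (-μ)) volume m]
          rw [← hI]
          ring_nf
  constructor
  · constructor
    · -- continuity
      have hfbdd : BddAbove (Set.range fun x : ℝ => ‖f x‖) := by
        refine ⟨Cf, ?_⟩
        rintro _ ⟨x, rfl⟩
        exact (hCf' x).trans (mul_le_of_le_one_right hCf0 (hw1 x))
      have hconv_cont : Continuous (fun m : ℝ => ∫ m₁ : ℝ, f (m - m₁) * g m₁) := by
        have h := hfbdd.continuous_convolution_right_of_integrable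
          (ContinuousLinearMap.mul ℝ ℂ) hg_int hfc
        have heq : (fun m : ℝ => ∫ m₁ : ℝ, f (m - m₁) * g m₁)
            = (g ⋆[ContinuousLinearMap.mul ℝ ℂ, volume] f) := by
          funext m
          rw [convolution_def]
          simp only [ContinuousLinearMap.mul_apply']
          exact integral_congr_ae (Filter.Eventually.of_forall fun t => mul_comm _ _)
        rw [heq]
        exact h
      exact continuous_const.mul hconv_cont
    · -- boundedness
      refine ⟨(Real.sqrt (2 * Real.pi))⁻¹ * (Cf * Cg * 2 ^ μ * (2 * I)), ?_⟩
      rintro _ ⟨m, rfl⟩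
      dsimp only
      have hc0 : (0:ℝ) ≤ (Real.sqrt (2 * Real.pi))⁻¹ := by positivity
      have h1 : (0:ℝ) < 1 + |m| := by positivity
      have habs' : ‖(((Real.sqrt (2 * Real.pi))⁻¹ : ℝ) : ℂ) *
          ∫ m₁ : ℝ, f (m - m₁) * g m₁‖
          = (Real.sqrt (2 * Real.pi))⁻¹ * ‖∫ m₁ : ℝ, f (m - m₁) * g m₁‖ := by
        rw [norm_mul, Complex.norm_of_nonneg hc0]
      rw [habs']
      have hcancel1 : (1 + |m|) ^ μ * (1 + |m|) ^ (-μ) = 1 := by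
        rw [← Real.rpow_add h1]
        simp
      have hcancel2 : Real.exp (β * |m|) * Real.exp (-(β * |m|)) = 1 := by
        rw [← Real.exp_add]
        simp
      calc (1 + |m|) ^ μ * Real.exp (β * |m|) *
            ((Real.sqrt (2 * Real.pi))⁻¹ * ‖∫ m₁ : ℝ, f (m - m₁) * g m₁‖)
          ≤ (1 + |m|) ^ μ * Real.exp (β * |m|) *
            ((Real.sqrt (2 * Real.pi))⁻¹ *
              ((Cf * Cg * (2 ^ μ * (1 + |m|) ^ (-μ) * Real.exp (-(β * |m|)))) * (2 * I))) := by
            have hnn : (0:ℝ) ≤ (1 + |m|) ^ μ * Real.exp (β * |m|) := by positivity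
            apply mul_le_mul_of_nonneg_left _ hnn
            exact mul_le_mul_of_nonneg_left (hbound m) hc0
        _ = (Real.sqrt (2 * Real.pi))⁻¹ * (Cf * Cg * 2 ^ μ * (2 * I)) *
            (((1 + |m|) ^ μ * (1 + |m|) ^ (-μ)) * (Real.exp (β * |m|) * Real.exp (-(β * |m|)))) := by
            ring
        _ = (Real.sqrt (2 * Real.pi))⁻¹ * (Cf * Cg * 2 ^ μ * (2 * I)) := by
            rw [hcancel1, hcancel2]; ring
  · -- Fourier part
    intro z hz
    set b : ℝ := |z.im| with hbdef
    have hEfun : ∀ m : ℝ, Complex.exp (Complex.I * z * (m : ℂ))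
        = Complex.exp (Complex.I * z * (m : ℂ)) := fun m => rfl
    have hE_cont : Continuous (fun m : ℝ => Complex.exp (Complex.I * z * (m : ℂ))) :=
      Complex.continuous_exp.comp (continuous_const.mul Complex.continuous_ofReal)
    have hEnorm : ∀ m : ℝ, ‖Complex.exp (Complex.I * z * (m : ℂ))‖ ≤ Real.exp (b * |m|) := by
      intro m
      rw [Complex.norm_exp]
      apply Real.exp_le_exp.mpr
      have hre : (Complex.I * z * (m : ℂ)).re = -(z.im * m) := by
        simp [Complex.mul_re, Complex.mul_im]
      rw [hre]
      calc -(z.im * m) ≤ |z.im * m| := neg_le_abs _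
        _ = b * |m| := abs_mul _ _
    have hsmall : ∀ x : ℝ, 0 ≤ x → Real.exp (-(β * x)) * Real.exp (b * x) ≤ 1 := by
      intro x hx
      rw [← Real.exp_add, Real.exp_le_one_iff]
      nlinarith [hz.le]
    -- slice bound
    have hFb : ∀ m₁ m : ℝ, ‖f (m - m₁) * g m₁ * Complex.exp (Complex.I * z * (m : ℂ))‖ ≤
        Cf * Cg * ((1 + |m₁|) ^ (-μ) * (1 + |m - m₁|) ^ (-μ)) := by
      intro m₁ m
      have h1 := hCf (m - m₁)
      have h2 := hCg m₁
      have h3 : ‖Complex.exp (Complex.I * z * (m : ℂ))‖ ≤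
          Real.exp (b * |m - m₁|) * Real.exp (b * |m₁|) := by
        refine (hEnorm m).trans ?_
        rw [← Real.exp_add]
        apply Real.exp_le_exp.mpr
        nlinarith [habs m m₁, abs_nonneg z.im]
      calc ‖f (m - m₁) * g m₁ * Complex.exp (Complex.I * z * (m : ℂ))‖
          = ‖f (m - m₁)‖ * ‖g m₁‖ * ‖Complex.exp (Complex.I * z * (m : ℂ))‖ := by
            rw [norm_mul, norm_mul]
        _ ≤ (Cf * ((1 + |m - m₁|) ^ (-μ) * Real.exp (-(β * |m - m₁|)))) *
            (Cg * ((1 + |m₁|) ^ (-μ) * Real.exp (-(β * |m₁|)))) *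
            (Real.exp (b * |m - m₁|) * Real.exp (b * |m₁|)) := by
            apply mul_le_mul _ h3 (norm_nonneg _) (by positivity)
            exact mul_le_mul h1 h2 (norm_nonneg _) (by positivity)
        _ = (Cf * Cg * ((1 + |m₁|) ^ (-μ) * (1 + |m - m₁|) ^ (-μ))) *
            ((Real.exp (-(β * |m - m₁|)) * Real.exp (b * |m - m₁|)) *
              (Real.exp (-(β * |m₁|)) * Real.exp (b * |m₁|))) := by ring
        _ ≤ (Cf * Cg * ((1 + |m₁|) ^ (-μ) * (1 + |m - m₁|) ^ (-μ))) * (1 * 1) := by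
            apply mul_le_mul_of_nonneg_left _ (by positivity)
            exact mul_le_mul (hsmall _ (abs_nonneg _)) (hsmall _ (abs_nonneg _))
              (by positivity) (by norm_num)
        _ = Cf * Cg * ((1 + |m₁|) ^ (-μ) * (1 + |m - m₁|) ^ (-μ)) := by ring
    -- slice integrability
    have hslice_int : ∀ m₁ : ℝ, Integrable (fun m : ℝ =>
        f (m - m₁) * g m₁ * Complex.exp (Complex.I * z * (m : ℂ))) := by
      intro m₁
      have hmaj : Integrable (fun m : ℝ =>
          Cf * Cg * ((1 + |m₁|) ^ (-μ) * (1 + |m - m₁|) ^ (-μ))) := by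
        have h0 : Integrable (fun m : ℝ => (1 + |m - m₁|) ^ (-μ)) := hw_int.comp_sub_right m₁
        have := (h0.const_mul ((1 + |m₁|) ^ (-μ))).const_mul (Cf * Cg)
        simpa [mul_assoc] using this
      refine hmaj.mono' ?_ (Filter.Eventually.of_forall (hFb m₁))
      exact (((hfc.comp (continuous_id.sub continuous_const)).mul continuous_const).mul
        hE_cont).aestronglyMeasurable
    -- product integrability
    have hF_cont : Continuous (fun p : ℝ × ℝ =>
        f (p.2 - p.1) * g p.1 * Complex.exp (Complex.I * z * (p.2 : ℂ))) := by
      apply Continuous.mul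
      · exact (hfc.comp (continuous_snd.sub continuous_fst)).mul (hgc.comp continuous_fst)
      · exact hE_cont.comp continuous_snd
    have hF_int : Integrable (fun p : ℝ × ℝ =>
        f (p.2 - p.1) * g p.1 * Complex.exp (Complex.I * z * (p.2 : ℂ)))
        (volume.prod volume) := by
      rw [integrable_prod_iff hF_cont.aestronglyMeasurable]
      constructor
      · exact Filter.Eventually.of_forall fun m₁ => hslice_int m₁
      · have hmaj : Integrable (fun m₁ : ℝ => Cf * Cg * I * (1 + |m₁|) ^ (-μ)) :=
          hw_int.const_mul _
        refine hmaj.mono' ?_ ?_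
        · exact hF_cont.aestronglyMeasurable.norm.integral_prod_right'
        · refine Filter.Eventually.of_forall fun m₁ => ?_
          have hnn : 0 ≤ ∫ m : ℝ,
              ‖f (m - m₁) * g m₁ * Complex.exp (Complex.I * z * (m : ℂ))‖ :=
            integral_nonneg fun m => norm_nonneg _
          rw [Real.norm_eq_abs, _root_.abs_of_nonneg hnn]
          have hmaj' : Integrable (fun m : ℝ =>
              (Cf * Cg * (1 + |m₁|) ^ (-μ)) * (1 + |m - m₁|) ^ (-μ)) :=
            (hw_int.comp_sub_right m₁).const_mul _
          calc (∫ m : ℝ, ‖f (m - m₁) * g m₁ * Complex.exp (Complex.I * z * (m : ℂ))‖)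
              ≤ ∫ m : ℝ, (Cf * Cg * (1 + |m₁|) ^ (-μ)) * (1 + |m - m₁|) ^ (-μ) := by
                refine integral_mono_of_nonneg
                  (Filter.Eventually.of_forall fun m => norm_nonneg _) hmaj'
                  (Filter.Eventually.of_forall fun m => ?_)
                have := hFb m₁ m
                calc ‖f (m - m₁) * g m₁ * Complex.exp (Complex.I * z * (m : ℂ))‖
                    ≤ Cf * Cg * ((1 + |m₁|) ^ (-μ) * (1 + |m - m₁|) ^ (-μ)) := hFb m₁ m
                  _ = (Cf * Cg * (1 + |m₁|) ^ (-μ)) * (1 + |m - m₁|) ^ (-μ) := by ring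
            _ = (Cf * Cg * (1 + |m₁|) ^ (-μ)) * I := by
                rw [integral_const_mul,
                  integral_sub_right_eq_self (fun t : ℝ => (1 + |t|) ^ (-μ)) m₁]
            _ = Cf * Cg * I * (1 + |m₁|) ^ (-μ) := by ring
    -- the main computation
    have hEadd : ∀ m m₁ : ℝ, Complex.exp (Complex.I * z * ((m - m₁ : ℝ) : ℂ)) *
        Complex.exp (Complex.I * z * (m₁ : ℂ)) = Complex.exp (Complex.I * z * (m : ℂ)) := by
      intro m m₁
      rw [← Complex.exp_add]
      congr 1
      push_cast
      ring
    have hAB : (∫ m : ℝ, f m * Complex.exp (Complex.I * z * (m : ℂ))) *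
        (∫ m : ℝ, g m * Complex.exp (Complex.I * z * (m : ℂ)))
        = ∫ m : ℝ, (∫ m₁ : ℝ, f (m - m₁) * g m₁) *
            Complex.exp (Complex.I * z * (m : ℂ)) := by
      have step1 : ∀ m₁ : ℝ,
          (∫ m : ℝ, f m * Complex.exp (Complex.I * z * (m : ℂ))) *
            (g m₁ * Complex.exp (Complex.I * z * (m₁ : ℂ)))
          = ∫ m : ℝ, f (m - m₁) * g m₁ * Complex.exp (Complex.I * z * (m : ℂ)) := by
        intro m₁
        rw [← integral_mul_const]
        rw [← integral_sub_right_eq_self (fun u : ℝ =>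
          f u * Complex.exp (Complex.I * z * (u : ℂ)) *
            (g m₁ * Complex.exp (Complex.I * z * (m₁ : ℂ)))) m₁]
        refine integral_congr_ae (Filter.Eventually.of_forall fun m => ?_)
        dsimp only
        rw [← hEadd m m₁]
        ring
      calc (∫ m : ℝ, f m * Complex.exp (Complex.I * z * (m : ℂ))) *
            (∫ m : ℝ, g m * Complex.exp (Complex.I * z * (m : ℂ)))
          = ∫ m₁ : ℝ, (∫ m : ℝ, f m * Complex.exp (Complex.I * z * (m : ℂ))) *
              (g m₁ * Complex.exp (Complex.I * z * (m₁ : ℂ))) := by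
            rw [integral_const_mul]
        _ = ∫ m₁ : ℝ, ∫ m : ℝ,
              f (m - m₁) * g m₁ * Complex.exp (Complex.I * z * (m : ℂ)) := by
            exact integral_congr_ae (Filter.Eventually.of_forall step1)
        _ = ∫ m : ℝ, ∫ m₁ : ℝ,
              f (m - m₁) * g m₁ * Complex.exp (Complex.I * z * (m : ℂ)) :=
            integral_integral_swap hF_int
        _ = ∫ m : ℝ, (∫ m₁ : ℝ, f (m - m₁) * g m₁) *
              Complex.exp (Complex.I * z * (m : ℂ)) := by
            refine integral_congr_ae (Filter.Eventually.of_forall fun m => ?_)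
            dsimp only
            rw [integral_mul_const]
    calc (((Real.sqrt (2 * Real.pi))⁻¹ : ℝ) : ℂ) *
          (∫ m : ℝ, f m * Complex.exp (Complex.I * z * (m : ℂ))) *
          ((((Real.sqrt (2 * Real.pi))⁻¹ : ℝ) : ℂ) *
            ∫ m : ℝ, g m * Complex.exp (Complex.I * z * (m : ℂ)))
        = (((Real.sqrt (2 * Real.pi))⁻¹ : ℝ) : ℂ) *
          ((((Real.sqrt (2 * Real.pi))⁻¹ : ℝ) : ℂ) *
            ((∫ m : ℝ, f m * Complex.exp (Complex.I * z * (m : ℂ))) *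
              (∫ m : ℝ, g m * Complex.exp (Complex.I * z * (m : ℂ))))) := by ring
      _ = (((Real.sqrt (2 * Real.pi))⁻¹ : ℝ) : ℂ) *
          ((((Real.sqrt (2 * Real.pi))⁻¹ : ℝ) : ℂ) *
            ∫ m : ℝ, (∫ m₁ : ℝ, f (m - m₁) * g m₁) *
              Complex.exp (Complex.I * z * (m : ℂ))) := by rw [hAB]
      _ = (((Real.sqrt (2 * Real.pi))⁻¹ : ℝ) : ℂ) *
          ∫ m : ℝ, ((((Real.sqrt (2 * Real.pi))⁻¹ : ℝ) : ℂ) *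
              ∫ m₁ : ℝ, f (m - m₁) * g m₁) *
            Complex.exp (Complex.I * z * (m : ℂ)) := by
          congr 1
          rw [← integral_const_mul]
          refine integral_congr_ae (Filter.Eventually.of_forall fun m => ?_)
          dsimp only
          ring
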